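/- arXiv:2605.02001 — 2 statements merged into one kernel-verified Lean document; each statement's English description precedes it below -/
import Mathlib

section
/- If 0 ≤ ρ_S < 1, 0 ≤ ρ_G < 1 and α > 0, then the vector π is a stationary distribution of the buffer-occupancy Markov chain: for every state j ∈ {0,…,L}, Σ_{i=0}^{L} π(i)·M(i,j) = π(j). -/
set_option maxHeartbeats 1000000


/-- The buffer-occupancy Markov chain transition matrix on states `{0,…,L}`. -/
noncomputable def Mmat (L : ℕ) (ρS ρG α : ℝ) :
    Matrix (Fin (L + 1)) (Fin (L + 1)) ℝ :=
  Matrix.of fun i j =>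
    if i.val = 0 then
      -- empty buffer
      if j.val = 0 then ρS else if j.val = 1 then 1 - ρS else 0
    else if i.val = L then
      -- full buffer
      if j.val + 1 = L then α * (1 - ρG) / (1 + α)
      else if j.val = L then (1 + α * ρG) / (1 + α)
      else 0
    else
      -- interior states
      if j.val + 1 = i.val then α * (1 - ρG) / (1 + α)
      else if j.val = i.val then (ρS + α * ρG) / (1 + α)
      else if j.val = i.val + 1 then (1 - ρS) / (1 + α)
      else 0

/-- The candidate stationary distribution `π` of the buffer-occupancy Markov chain. -/
noncomputable def piv (L : ℕ) (ρS ρG α : ℝ) : ℕ → ℝ := fun i =>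
  let p : ℝ := (1 - ρS) / (1 + α)
  let q : ℝ := α * (1 - ρG) / (1 + α)
  let π0 : ℝ := 1 / (1 + (1 - ρS) * ∑ k ∈ Finset.Icc 1 L, p ^ (k - 1) / q ^ k)
  if i = 0 then π0 else p ^ (i - 1) / q ^ i * (1 - ρS) * π0

/-- Nat-indexed version of the transition matrix (defeq to `Mmat` entries). -/
noncomputable def Mval (L : ℕ) (ρS ρG α : ℝ) : ℕ → ℕ → ℝ := fun i j =>
  if i = 0 then
    if j = 0 then ρS else if j = 1 then 1 - ρS else 0
  else if i = L then
    if j + 1 = L then α * (1 - ρG) / (1 + α)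
    else if j = L then (1 + α * ρG) / (1 + α)
    else 0
  else
    if j + 1 = i then α * (1 - ρG) / (1 + α)
    else if j = i then (ρS + α * ρG) / (1 + α)
    else if j = i + 1 then (1 - ρS) / (1 + α)
    else 0


/-- `π` is a stationary distribution of the buffer-occupancy chain:
`Σ_{i=0}^{L} π(i)·M(i,j) = π(j)` for every state `j`. -/
theorem stmt6 (L : ℕ) (hL : 1 ≤ L) (ρS ρG α : ℝ)
    (hS0 : 0 ≤ ρS) (hS1 : ρS < 1) (hG0 : 0 ≤ ρG) (hG1 : ρG < 1) (hα : 0 < α) :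
    ∀ j : Fin (L + 1),
      ∑ i : Fin (L + 1), piv L ρS ρG α i.val * Mmat L ρS ρG α i j =
        piv L ρS ρG α j.val := by
  have h1α : (0:ℝ) < 1 + α := by linarith
  have hα' : (1:ℝ) + α ≠ 0 := ne_of_gt h1α
  have hqpos : (0:ℝ) < α * (1 - ρG) / (1 + α) := div_pos (by nlinarith) h1α
  have hq : α * (1 - ρG) / (1 + α) ≠ 0 := ne_of_gt hqpos
  have hαne : α ≠ 0 := ne_of_gt hα
  have hGne : (1:ℝ) - ρG ≠ 0 := by linarith
  have hpiv : ∀ i : ℕ, i ≠ 0 → piv L ρS ρG α i =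
      ((1 - ρS) / (1 + α)) ^ (i - 1) / (α * (1 - ρG) / (1 + α)) ^ i * (1 - ρS)
        * piv L ρS ρG α 0 := by
    intro i hi
    simp [piv, hi]
  intro j
  obtain ⟨jv, hjv⟩ := j
  have hMM : ∀ i : Fin (L+1),
      Mmat L ρS ρG α i ⟨jv, hjv⟩ = Mval L ρS ρG α i.val jv := fun i => rfl
  simp only [hMM]
  rw [Fin.sum_univ_eq_sum_range (fun i => piv L ρS ρG α i * Mval L ρS ρG α i jv) (L+1)]
  set c := piv L ρS ρG α 0 with hc
  clear_value c
  rcases Nat.eq_zero_or_pos jv with hj0 | hj1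
  · -- j = 0
    subst hj0
    have hzero : ∀ i ∈ Finset.range (L + 1), i ∉ Finset.range 2 →
        piv L ρS ρG α i * Mval L ρS ρG α i 0 = 0 := by
      intro i hi hni
      simp only [Finset.mem_range] at hi hni
      have hz : Mval L ρS ρG α i 0 = 0 := by
        simp only [Mval]; split_ifs <;> first | rfl | omega | exact (‹False›).elim
      rw [hz, mul_zero]
    rw [← Finset.sum_subset (Finset.range_subset_range.2 (by omega : 2 ≤ L + 1)) hzero]
    rw [Finset.sum_range_succ, Finset.sum_range_one]
    have h00 : Mval L ρS ρG α 0 0 = ρS := by simp [Mval]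
    have h10 : Mval L ρS ρG α 1 0 = α * (1 - ρG) / (1 + α) := by
      simp only [Mval]; split_ifs <;> first | rfl | omega | exact (‹False›).elim
    rw [h00, h10, hpiv 1 one_ne_zero, ← hc]
    simp only [pow_one, pow_zero]
    field_simp [hαne, hGne, hα']
    ring
  · rcases eq_or_lt_of_le (by omega : jv ≤ L) with hjL | hjL
    · -- j = L
      subst hjL
      rcases eq_or_lt_of_le (show 1 ≤ jv by omega) with h1 | h2
      · -- L = 1
        obtain rfl : jv = 1 := h1.symm
        rw [Finset.sum_range_succ, Finset.sum_range_one]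
        have h01 : Mval 1 ρS ρG α 0 1 = 1 - ρS := by simp [Mval]
        have h11 : Mval 1 ρS ρG α 1 1 = (1 + α * ρG) / (1 + α) := by
          simp only [Mval]; split_ifs <;> first | rfl | omega | exact (‹False›).elim
        rw [h01, h11, hpiv 1 one_ne_zero, ← hc]
        simp only [pow_one, pow_zero]
        field_simp [hαne, hGne, hα']
        ring
      · -- L ≥ 2
        obtain ⟨m, rfl⟩ : ∃ m, jv = m + 2 := ⟨jv - 2, by omega⟩
        have hsub : Finset.Icc (m + 1) (m + 2) ⊆ Finset.range (m + 2 + 1) := by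
          intro x hx
          simp only [Finset.mem_Icc, Finset.mem_range] at *
          omega
        have hzero : ∀ i ∈ Finset.range (m + 2 + 1), i ∉ Finset.Icc (m + 1) (m + 2) →
            piv (m + 2) ρS ρG α i * Mval (m + 2) ρS ρG α i (m + 2) = 0 := by
          intro i hi hni
          simp only [Finset.mem_range] at hi
          simp only [Finset.mem_Icc] at hni
          have hz : Mval (m + 2) ρS ρG α i (m + 2) = 0 := by
            simp only [Mval]; split_ifs <;> first | rfl | omega | exact (‹False›).elim
          rw [hz, mul_zero]
        rw [← Finset.sum_subset hsub hzero]
        rw [Finset.sum_Icc_succ_top (by omega), Finset.Icc_self, Finset.sum_singleton]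
        have hA : Mval (m + 2) ρS ρG α (m + 1) (m + 2) = (1 - ρS) / (1 + α) := by
          simp only [Mval]; split_ifs <;> first | rfl | omega | exact (‹False›).elim
        have hB : Mval (m + 2) ρS ρG α (m + 2) (m + 2) = (1 + α * ρG) / (1 + α) := by
          simp only [Mval]; split_ifs <;> first | rfl | omega | exact (‹False›).elim
        rw [hA, hB, hpiv (m+1) (by omega), hpiv (m+2) (by omega)]
        have e1 : m + 1 - 1 = m := by omega
        have e2 : m + 2 - 1 = m + 1 := by omega
        rw [e1, e2]
        have hqk : (α * (1 - ρG) / (1 + α)) ^ m ≠ 0 := pow_ne_zero _ hq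
        simp only [pow_succ]
        field_simp [hαne, hGne, hα']
        ring
    · -- 0 < jv < L : interior
      have hsub : Finset.Icc (jv - 1) (jv + 1) ⊆ Finset.range (L + 1) := by
        intro x hx
        simp only [Finset.mem_Icc, Finset.mem_range] at *
        omega
      have hzero : ∀ i ∈ Finset.range (L + 1), i ∉ Finset.Icc (jv - 1) (jv + 1) →
          piv L ρS ρG α i * Mval L ρS ρG α i jv = 0 := by
        intro i hi hni
        simp only [Finset.mem_range] at hi
        simp only [Finset.mem_Icc] at hni
        have hz : Mval L ρS ρG α i jv = 0 := by
          simp only [Mval]; split_ifs <;> first | rfl | omega | exact (‹False›).elim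
        rw [hz, mul_zero]
      rw [← Finset.sum_subset hsub hzero]
      obtain ⟨k, rfl⟩ : ∃ k, jv = k + 1 := ⟨jv - 1, by omega⟩
      have e0 : k + 1 - 1 = k := by omega
      rw [e0]
      rw [show k + 1 + 1 = (k + 1) + 1 from rfl, Finset.sum_Icc_succ_top (by omega),
        Finset.sum_Icc_succ_top (by omega), Finset.Icc_self, Finset.sum_singleton]
      have hB : Mval L ρS ρG α (k + 1) (k + 1) = (ρS + α * ρG) / (1 + α) := by
        simp only [Mval]; split_ifs <;> first | rfl | omega | exact (‹False›).elim
      have hC : Mval L ρS ρG α (k + 2) (k + 1) = α * (1 - ρG) / (1 + α) := by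
        simp only [Mval]; split_ifs <;> first | rfl | omega | exact (‹False›).elim
      rcases Nat.eq_zero_or_pos k with hk0 | hk1
      · -- jv = 1
        subst hk0
        have hA : Mval L ρS ρG α 0 1 = 1 - ρS := by
          simp only [Mval]; split_ifs <;> first | rfl | omega | exact (‹False›).elim
        rw [hA, hB, hC, hpiv 1 (by omega), hpiv 2 (by omega), ← hc]
        norm_num
        field_simp [hαne, hGne, hα']
        ring
      · obtain ⟨m, rfl⟩ : ∃ m, k = m + 1 := ⟨k - 1, by omega⟩
        have hA : Mval L ρS ρG α (m + 1) (m + 2) = (1 - ρS) / (1 + α) := by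
          simp only [Mval]; split_ifs <;> first | rfl | omega | exact (‹False›).elim
        rw [hA, hB, hC, hpiv (m+1) (by omega), hpiv (m+2) (by omega),
          hpiv (m+3) (by omega)]
        have e1 : m + 1 - 1 = m := by omega
        have e2 : m + 2 - 1 = m + 1 := by omega
        have e3 : m + 3 - 1 = m + 2 := by omega
        rw [e1, e2, e3]
        have hqk : (α * (1 - ρG) / (1 + α)) ^ m ≠ 0 := pow_ne_zero _ hq
        simp only [pow_succ]
        field_simp [hαne, hGne, hα']
        ring
end

section
/- If 0 ≤ ρ_S < 1, 0 ≤ ρ_G < 1 and α > 0, then the stationary distribution of the buffer-occupancy Markov chain is unique: if σ is any vector on {0,…,L} with σ(i) ≥ 0 for all i, Σ_{i=0}^{L} σ(i) = 1, and Σ_{i=0}^{L} σ(i)·M(i,j) = σ(j) for all j, then σ(i) = π(i) for every i. -/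
private lemma sum_two {n : ℕ} (f : Fin n → ℝ) (a b : Fin n) (hab : a ≠ b)
    (h0 : ∀ i, i ≠ a → i ≠ b → f i = 0) :
    ∑ i, f i = f a + f b := by
  rw [← Finset.sum_subset (Finset.subset_univ ({a, b} : Finset (Fin n)))]
  · rw [Finset.sum_insert (by simp [hab]), Finset.sum_singleton]
  · intro i _ hi
    simp only [Finset.mem_insert, Finset.mem_singleton, not_or] at hi
    exact h0 i hi.1 hi.2

private lemma sum_three {n : ℕ} (f : Fin n → ℝ) (a b c : Fin n)
    (hab : a ≠ b) (hac : a ≠ c) (hbc : b ≠ c)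
    (h0 : ∀ i, i ≠ a → i ≠ b → i ≠ c → f i = 0) :
    ∑ i, f i = f a + f b + f c := by
  rw [← Finset.sum_subset (Finset.subset_univ ({a, b, c} : Finset (Fin n)))]
  · rw [Finset.sum_insert (by simp [hab, hac]), Finset.sum_insert (by simp [hbc]),
      Finset.sum_singleton, add_assoc]
  · intro i _ hi
    simp only [Finset.mem_insert, Finset.mem_singleton, not_or] at hi
    exact h0 i hi.1 hi.2.1 hi.2.2

private lemma Mmat_eq_zero {L : ℕ} {ρS ρG α : ℝ} {i j : Fin (L + 1)}
    (h : j.val + 1 < i.val ∨ i.val + 1 < j.val) :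
    Mmat L ρS ρG α i j = 0 := by
  have hi := i.isLt
  have hj := j.isLt
  rcases h with h | h <;>
  · simp only [Mmat, Matrix.of_apply]
    split_ifs <;> first | rfl | (exfalso; omega)

private lemma Mmat_00 {L : ℕ} {ρS ρG α : ℝ} {i j : Fin (L + 1)}
    (h1 : i.val = 0) (h2 : j.val = 0) :
    Mmat L ρS ρG α i j = ρS := by
  simp only [Mmat, Matrix.of_apply]
  split_ifs <;> first | rfl | (exfalso; omega)

private lemma Mmat_up0 {L : ℕ} {ρS ρG α : ℝ} {i j : Fin (L + 1)}
    (h1 : i.val = 0) (h2 : j.val = 1) :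
    Mmat L ρS ρG α i j = 1 - ρS := by
  simp only [Mmat, Matrix.of_apply]
  split_ifs <;> first | rfl | (exfalso; omega)

private lemma Mmat_up {L : ℕ} {ρS ρG α : ℝ} {i j : Fin (L + 1)}
    (h : i.val + 1 = j.val) (h1 : 1 ≤ i.val) (h2 : i.val < L) :
    Mmat L ρS ρG α i j = (1 - ρS) / (1 + α) := by
  simp only [Mmat, Matrix.of_apply]
  split_ifs <;> first | rfl | (exfalso; omega)

private lemma Mmat_down {L : ℕ} {ρS ρG α : ℝ} {i j : Fin (L + 1)}
    (h : j.val + 1 = i.val) :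
    Mmat L ρS ρG α i j = α * (1 - ρG) / (1 + α) := by
  simp only [Mmat, Matrix.of_apply]
  split_ifs <;> first | rfl | (exfalso; omega)

private lemma Mmat_diag {L : ℕ} {ρS ρG α : ℝ} {i j : Fin (L + 1)}
    (h : i.val = j.val) (h1 : 1 ≤ i.val) (h2 : i.val < L) :
    Mmat L ρS ρG α i j = (ρS + α * ρG) / (1 + α) := by
  simp only [Mmat, Matrix.of_apply]
  split_ifs <;> first | rfl | (exfalso; omega)

/-- the stationary distribution of the buffer-occupancy chain is unique:
any nonnegative vector `σ` summing to 1 with `σM = σ` coincides with `π`. -/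
theorem stmt8 (L : ℕ) (hL : 1 ≤ L) (ρS ρG α : ℝ)
    (hS0 : 0 ≤ ρS) (hS1 : ρS < 1) (hG0 : 0 ≤ ρG) (hG1 : ρG < 1) (hα : 0 < α) :
    ∀ σ : Fin (L + 1) → ℝ,
      (∀ i : Fin (L + 1), 0 ≤ σ i) →
      (∑ i : Fin (L + 1), σ i = 1) →
      (∀ j : Fin (L + 1), ∑ i : Fin (L + 1), σ i * Mmat L ρS ρG α i j = σ j) →
      ∀ i : Fin (L + 1), σ i = piv L ρS ρG α i.val := by
  intro σ hpos hsum hbal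
  have hα1 : (0 : ℝ) < 1 + α := by linarith
  have hp : (0 : ℝ) < (1 - ρS) / (1 + α) := div_pos (by linarith) hα1
  have hq : (0 : ℝ) < α * (1 - ρG) / (1 + α) :=
    div_pos (mul_pos hα (by linarith)) hα1
  have hpqr : (1 - ρS) / (1 + α) + α * (1 - ρG) / (1 + α) + (ρS + α * ρG) / (1 + α)
      = 1 := by
    field_simp
    ring
  -- σ' as a function on ℕ
  set σ' : ℕ → ℝ := fun k => if h : k < L + 1 then σ ⟨k, h⟩ else 0 with hσ'_def
  have hσ' : ∀ k (h : k < L + 1), σ' k = σ ⟨k, h⟩ := fun k h => dif_pos h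
  -- balance at 0
  have e0 : σ' 0 * ρS + σ' 1 * (α * (1 - ρG) / (1 + α)) = σ' 0 := by
    have hb := hbal ⟨0, by omega⟩
    rw [sum_two _ ⟨0, by omega⟩ ⟨1, by omega⟩
      (by simp only [ne_eq, Fin.mk.injEq]; omega)
      (fun i hi1 hi2 => ?_)] at hb
    · rw [Mmat_00 rfl rfl, Mmat_down rfl] at hb
      rw [hσ' 0 (by omega), hσ' 1 (by omega)]
      exact hb
    · have h1 : i.val ≠ 0 := fun h => hi1 (Fin.ext h)
      have h2 : i.val ≠ 1 := fun h => hi2 (Fin.ext h)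
      rw [Mmat_eq_zero (Or.inl (show (0 : ℕ) + 1 < i.val by omega)), mul_zero]
  -- balance at interior j
  have ebal : ∀ j : ℕ, 1 ≤ j → j < L →
      σ' (j - 1) * (if j = 1 then 1 - ρS else (1 - ρS) / (1 + α))
        + σ' j * ((ρS + α * ρG) / (1 + α))
        + σ' (j + 1) * (α * (1 - ρG) / (1 + α)) = σ' j := by
    intro j hj1 hj2
    have hb := hbal ⟨j, by omega⟩
    rw [sum_three _ ⟨j - 1, by omega⟩ ⟨j, by omega⟩ ⟨j + 1, by omega⟩
      (by simp only [ne_eq, Fin.mk.injEq]; omega)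
      (by simp only [ne_eq, Fin.mk.injEq]; omega)
      (by simp only [ne_eq, Fin.mk.injEq]; omega)
      (fun i hi1 hi2 hi3 => ?_)] at hb
    · have hMup : Mmat L ρS ρG α ⟨j - 1, by omega⟩ ⟨j, by omega⟩ =
          (if j = 1 then 1 - ρS else (1 - ρS) / (1 + α)) := by
        rcases eq_or_ne j 1 with h | h
        · subst h
          rw [if_pos rfl]
          exact Mmat_up0 rfl rfl
        · rw [if_neg h]
          exact Mmat_up (show (j - 1) + 1 = j by omega) (show 1 ≤ j - 1 by omega)
            (show j - 1 < L by omega)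
      rw [hMup, Mmat_diag rfl (show 1 ≤ j by omega) (show j < L by omega),
        Mmat_down (show j + 1 = j + 1 by rfl)] at hb
      rw [hσ' (j - 1) (by omega), hσ' j (by omega), hσ' (j + 1) (by omega)]
      exact hb
    · have h1 : i.val ≠ j - 1 := fun h => hi1 (Fin.ext h)
      have h2 : i.val ≠ j := fun h => hi2 (Fin.ext h)
      have h3 : i.val ≠ j + 1 := fun h => hi3 (Fin.ext h)
      rw [Mmat_eq_zero (show j + 1 < i.val ∨ i.val + 1 < j by omega), mul_zero]
  -- the step recurrence
  have hrecur : ∀ j : ℕ, j < L →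
      σ' (j + 1) * (α * (1 - ρG) / (1 + α))
        = σ' j * (if j = 0 then 1 - ρS else (1 - ρS) / (1 + α)) := by
    intro j
    induction j with
    | zero =>
      intro _
      rw [if_pos rfl]
      linear_combination e0
    | succ j ih =>
      intro hj
      have ihq := ih (by omega)
      have hb := ebal (j + 1) (by omega) hj
      simp only [Nat.add_sub_cancel] at hb
      rw [if_neg (Nat.succ_ne_zero j)]
      rcases eq_or_ne j 0 with h | h
      · subst h
        rw [if_pos rfl] at ihq
        rw [if_pos rfl] at hb
        linear_combination hb + ihq - σ' (0 + 1) * hpqr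
      · rw [if_neg h] at ihq
        rw [if_neg (by omega : j + 1 ≠ 1)] at hb
        linear_combination hb + ihq - σ' (j + 1) * hpqr
  -- closed form
  set c : ℕ → ℝ := fun j => if j = 0 then 1
      else (1 - ρS) * ((1 - ρS) / (1 + α)) ^ (j - 1) / (α * (1 - ρG) / (1 + α)) ^ j
    with hc_def
  have form : ∀ j : ℕ, j ≤ L → σ' j = σ' 0 * c j := by
    intro j
    induction j with
    | zero =>
      intro _
      simp [hc_def]
    | succ j ih =>
      intro hj
      have ihc := ih (by omega)
      have hrec := hrecur j (by omega)
      have hσj1 : σ' (j + 1) = σ' j * (if j = 0 then 1 - ρS else (1 - ρS) / (1 + α))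
          / (α * (1 - ρG) / (1 + α)) := by
        rw [eq_div_iff hq.ne']
        exact hrec
      rw [hσj1, ihc]
      rcases eq_or_ne j 0 with h | h
      · subst h
        rw [if_pos rfl]
        simp only [hc_def, if_pos rfl, Nat.succ_ne_zero, one_ne_zero, if_false]
        rw [pow_zero, pow_one]
        have h1 : ((1 : ℝ) + α) ≠ 0 := hα1.ne'
        have h2 : (α : ℝ) ≠ 0 := hα.ne'
        have h3 : ((1 : ℝ) - ρG) ≠ 0 := by linarith
        field_simp
      · obtain ⟨m, rfl⟩ : ∃ m, j = m + 1 := ⟨j - 1, by omega⟩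
        rw [if_neg h]
        simp only [hc_def, if_neg (Nat.succ_ne_zero m), if_neg (Nat.succ_ne_zero (m + 1)),
          Nat.add_sub_cancel]
        rw [pow_succ (α * (1 - ρG) / (1 + α)) (m + 1), pow_succ ((1 - ρS) / (1 + α)) m]
        have h1 : ((1 : ℝ) + α) ≠ 0 := hα1.ne'
        have h2 : (α : ℝ) ≠ 0 := hα.ne'
        have h3 : ((1 : ℝ) - ρG) ≠ 0 := by linarith
        field_simp
  -- the total sum
  have hsum' : ∑ k ∈ Finset.range (L + 1), σ' k = 1 := by
    rw [← hsum, ← Fin.sum_univ_eq_sum_range σ' (L + 1)]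
    exact Finset.sum_congr rfl fun i _ => by rw [hσ' i.val i.isLt]
  have hcsum : ∑ k ∈ Finset.range (L + 1), c k
      = 1 + (1 - ρS) * ∑ k ∈ Finset.Icc 1 L,
          ((1 - ρS) / (1 + α)) ^ (k - 1) / (α * (1 - ρG) / (1 + α)) ^ k := by
    rw [Finset.range_eq_Ico, Finset.sum_eq_sum_Ico_succ_bot (by omega)]
    have h0 : c 0 = 1 := by simp [hc_def]
    rw [h0, ← Finset.Ico_add_one_right_eq_Icc, Finset.mul_sum]
    congr 1
    refine Finset.sum_congr rfl fun k hk => ?_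
    simp only [Finset.mem_Ico] at hk
    simp only [hc_def, if_neg (show k ≠ 0 by omega)]
    ring
  set S : ℝ := 1 + (1 - ρS) * ∑ k ∈ Finset.Icc 1 L,
      ((1 - ρS) / (1 + α)) ^ (k - 1) / (α * (1 - ρG) / (1 + α)) ^ k with hS_def
  have hS : 0 < S := by
    have h1 : 0 ≤ ∑ k ∈ Finset.Icc 1 L,
        ((1 - ρS) / (1 + α)) ^ (k - 1) / (α * (1 - ρG) / (1 + α)) ^ k :=
      Finset.sum_nonneg fun k _ => div_nonneg (pow_nonneg hp.le _) (pow_nonneg hq.le _)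
    have h2 : 0 ≤ (1 - ρS) * ∑ k ∈ Finset.Icc 1 L,
        ((1 - ρS) / (1 + α)) ^ (k - 1) / (α * (1 - ρG) / (1 + α)) ^ k :=
      mul_nonneg (by linarith) h1
    rw [hS_def]
    linarith
  have hσ0 : σ' 0 = 1 / S := by
    rw [eq_div_iff hS.ne']
    calc σ' 0 * S = ∑ k ∈ Finset.range (L + 1), σ' 0 * c k := by
          rw [← Finset.mul_sum, hcsum, hS_def]
      _ = ∑ k ∈ Finset.range (L + 1), σ' k :=
          Finset.sum_congr rfl fun k hk =>
            (form k (by have := Finset.mem_range.mp hk; omega)).symm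
      _ = 1 := hsum'
  -- conclusion
  intro i
  have hi : i.val ≤ L := by omega
  have hform := form i.val hi
  rw [hσ' i.val i.isLt] at hform
  simp only [Fin.eta] at hform
  rw [hform, hσ0]
  simp only [piv]
  rcases eq_or_ne i.val 0 with h | h
  · rw [h, if_pos rfl]
    simp only [hc_def, if_pos rfl, hS_def]
    ring
  · rw [if_neg h]
    simp only [hc_def, if_neg h, hS_def]
    ring
end
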